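/- Let G be a finite connected bridgeless graph, let r ≥ 1 be an integer such that some vertex u of G satisfies d_G(u,v) ≤ r for every vertex v (i.e., rad(G) ≤ r), and let η ≥ 3 be an integer such that every edge of G is contained in a cycle of length at most η. Then G admits an orientation H of diameter at most 2·Σ_{i=1}^{r} min{2i, η−1}; in particular, G admits an orientation of diameter at most 2r(η−1). -/

import Mathlib

open SimpleGraph Finset

variable {V : Type*}

/-- `o` is an orientation of `G`: each edge of `G` gets exactly one direction. -/
def IsOrientation (G : SimpleGraph V) (o : V → V → Prop) : Prop :=
  (∀ x y, o x y → G.Adj x y) ∧ (∀ x y, G.Adj x y → (o x y ∨ o y x)) ∧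
    (∀ x y, o x y → ¬ o y x)

/-- There is a directed path (with respect to `o`) from `x` to `y` of length at most `n`. -/
def DPathLE (o : V → V → Prop) (n : ℕ) (x y : V) : Prop :=
  ∃ m ≤ n, ∃ f : ℕ → V, f 0 = x ∧ f m = y ∧ (∀ i < m, o (f i) (f (i + 1))) ∧
    (∀ i ≤ m, ∀ j ≤ m, f i = f j → i = j)

/-- `G` admits an orientation of radius at most `R`. -/
def OrientRadiusLE (G : SimpleGraph V) (R : ℕ) : Prop :=
  ∃ o : V → V → Prop, IsOrientation G o ∧
    ∃ u : V, ∀ v : V, DPathLE o R u v ∧ DPathLE o R v u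

/-- `G` admits an orientation of diameter at most `D`. -/
def OrientDiamLE (G : SimpleGraph V) (D : ℕ) : Prop :=
  ∃ o : V → V → Prop, IsOrientation G o ∧ ∀ x y : V, DPathLE o D x y

/-- The edge `e` lies on a cycle of `G` of length at most `n`. -/
def InCycleLE (G : SimpleGraph V) (e : Sym2 V) (n : ℕ) : Prop :=
  ∃ (v : V) (c : G.Walk v v), c.IsCycle ∧ e ∈ c.edges ∧ c.length ≤ n

/-- `G` is bridgeless: no edge is a cut edge. -/
def Bridgeless (G : SimpleGraph V) : Prop :=
  ∀ e ∈ G.edgeSet, ¬ G.IsBridge e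

/-- `c` is a rainbow `k`-edge-coloring of `G`: every two distinct vertices are joined
by a path whose edges receive pairwise distinct colors. -/
def IsRainbowColoring (G : SimpleGraph V) (k : ℕ) (c : Sym2 V → Fin k) : Prop :=
  ∀ x y : V, x ≠ y → ∃ p : G.Walk x y, p.IsPath ∧ (p.edges.map c).Nodup

/-- The rainbow connection number of `G` is at most `k`. -/
def RcLE (G : SimpleGraph V) (k : ℕ) : Prop :=
  ∃ c : Sym2 V → Fin k, IsRainbowColoring G k c

namespace ODAux

variable {V : Type*}

/-- `f` is an `R`-chain of length `m`. -/
def Chain (R : V → V → Prop) (m : ℕ) (f : ℕ → V) : Prop := ∀ i < m, R (f i) (f (i+1))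

lemma chain_mono {R S : V → V → Prop} (h : ∀ a b, R a b → S a b) {m : ℕ} {f : ℕ → V}
    (hc : Chain R m f) : Chain S m f := fun i hi => h _ _ (hc i hi)

lemma chain_shift {R : V → V → Prop} {m : ℕ} {f : ℕ → V} (hc : Chain R m f) (t k : ℕ)
    (h : t + k ≤ m) : Chain R k (fun i => f (t + i)) := by
  intro i hi
  have := hc (t + i) (by omega)
  simpa [Nat.add_assoc] using this

def splice (f : ℕ → V) (m : ℕ) (g : ℕ → V) : ℕ → V := fun i => if i < m then f i else g (i - m)

lemma splice_zero (f : ℕ → V) (m : ℕ) (g : ℕ → V) (h : f m = g 0) : splice f m g 0 = f 0 := by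
  rcases Nat.eq_zero_or_pos m with hm | hm
  · simp [splice, hm, h.symm]
  · simp [splice, hm]

lemma splice_last (f : ℕ → V) (m m' : ℕ) (g : ℕ → V) (h : f m = g 0) :
    splice f m g (m + m') = g m' := by
  rcases Nat.eq_zero_or_pos m' with hm | hm
  · subst hm; simp [splice, h.symm]
  · have : ¬ (m + m' < m) := by omega
    simp [splice, this]

lemma chain_splice {R : V → V → Prop} {m m' : ℕ} {f g : ℕ → V}
    (hf : Chain R m f) (hg : Chain R m' g) (h : f m = g 0) :
    Chain R (m + m') (splice f m g) := by
  intro i hi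
  by_cases h1 : i < m
  · by_cases h2 : i + 1 < m
    · simpa [splice, h1, h2] using hf i h1
    · have h3 : i + 1 = m := by omega
      have : splice f m g (i+1) = f (i+1) := by
        simp [splice, h2, h3, h.symm]
      rw [this]; simpa [splice, h1] using hf i h1
  · have h2 : ¬ (i + 1 < m) := by omega
    have e1 : splice f m g i = g (i - m) := by simp [splice, h1]
    have e2 : splice f m g (i+1) = g (i - m + 1) := by
      have : i + 1 - m = i - m + 1 := by omega
      simp [splice, h2, this]
    rw [e1, e2]
    exact hg (i - m) (by omega)

lemma chain_rev {R : V → V → Prop} (hsym : ∀ a b, R a b → R b a) {m : ℕ} {f : ℕ → V}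
    (hc : Chain R m f) : Chain R m (fun i => f (m - i)) := by
  intro i hi
  have h1 : m - i - 1 + 1 = m - i := by omega
  have h2 : m - (i+1) = m - i - 1 := by omega
  have := hc (m - i - 1) (by omega)
  rw [h1] at this
  show R (f (m - i)) (f (m - (i+1)))
  rw [h2]
  exact hsym _ _ this

/-- Directed walks of length at most `n`. -/
def DW (o : V → V → Prop) (n : ℕ) (x y : V) : Prop :=
  ∃ m, m ≤ n ∧ ∃ f : ℕ → V, f 0 = x ∧ f m = y ∧ Chain o m f

lemma DW.refl (o : V → V → Prop) (n : ℕ) (x : V) : DW o n x x :=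
  ⟨0, Nat.zero_le _, fun _ => x, rfl, rfl, fun i hi => absurd hi (by omega)⟩

lemma DW.mono_n {o : V → V → Prop} {n n' : ℕ} (h : n ≤ n') {x y : V} (hd : DW o n x y) :
    DW o n' x y := by
  obtain ⟨m, hm, f, h1, h2, h3⟩ := hd
  exact ⟨m, hm.trans h, f, h1, h2, h3⟩

lemma DW.mono_o {o o' : V → V → Prop} (h : ∀ a b, o a b → o' a b) {n : ℕ} {x y : V}
    (hd : DW o n x y) : DW o' n x y := by
  obtain ⟨m, hm, f, h1, h2, h3⟩ := hd
  exact ⟨m, hm, f, h1, h2, chain_mono h h3⟩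

lemma DW.trans {o : V → V → Prop} {n n' : ℕ} {x y z : V} (h1 : DW o n x y) (h2 : DW o n' y z) :
    DW o (n + n') x z := by
  obtain ⟨m, hm, f, hf1, hf2, hf3⟩ := h1
  obtain ⟨m', hm', g, hg1, hg2, hg3⟩ := h2
  have hfg : f m = g 0 := by rw [hf2, hg1]
  exact ⟨m + m', by omega, splice f m g, by rw [splice_zero f m g hfg, hf1],
    by rw [splice_last f m m' g hfg, hg2], chain_splice hf3 hg3 hfg⟩


lemma DW.single {o : V → V → Prop} {x y : V} (h : o x y) : DW o 1 x y := by
  refine ⟨1, le_rfl, fun k => if k = 0 then x else y, by simp, by simp, ?_⟩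
  intro i hi
  have hi0 : i = 0 := by omega
  subst hi0
  simpa using h

lemma dpath_mono {o : V → V → Prop} {n n' : ℕ} (h : n ≤ n') {x y : V} :
    DPathLE o n x y → DPathLE o n' x y := by
  rintro ⟨m, hm, f, h1, h2, h3, h4⟩
  exact ⟨m, hm.trans h, f, h1, h2, h3, h4⟩

lemma chain_to_dpath {o : V → V → Prop} :
    ∀ (m : ℕ) (f : ℕ → V), Chain o m f → DPathLE o m (f 0) (f m) := by
  intro m
  induction m using Nat.strong_induction_on with
  | _ m IH =>
    intro f hc
    by_cases hinj : ∀ i ≤ m, ∀ j ≤ m, f i = f j → i = j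
    · exact ⟨m, le_rfl, f, rfl, rfl, hc, hinj⟩
    · push_neg at hinj
      obtain ⟨i, hi, j, hj, hfij, hne⟩ := hinj
      -- wlog i < j
      rcases Nat.lt_or_ge i j with hlt | hge
      case _ =>
        -- splice out (i, j]
        set d := j - i with hd
        have hd1 : 1 ≤ d := by omega
        set g : ℕ → V := fun t => if t < i then f t else f (t + d) with hg
        have hlen : m - d < m := by omega
        have hchain : Chain o (m - d) g := by
          intro t ht
          by_cases h1 : t + 1 < i
          · have h0 : t < i := by omega
            simpa [hg, h0, h1] using hc t (by omega)
          · by_cases h0 : t < i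
            · have h2 : t + 1 = i := by omega
              have e1 : g t = f t := by simp [hg, h0]
              have e2 : g (t+1) = f (t + 1) := by
                have : g (t+1) = f (t + 1 + d) := by simp [hg, h1]
                rw [this]
                have : t + 1 + d = j := by omega
                rw [this, ← hfij, h2]
              rw [e1, e2]; exact hc t (by omega)
            · have e1 : g t = f (t + d) := by simp [hg, h0]
              have e2 : g (t+1) = f (t + 1 + d) := by simp [hg, h1]
              rw [e1, e2]
              have : t + d + 1 = t + 1 + d := by omega
              rw [← this]
              exact hc (t + d) (by omega)
        have h0 : g 0 = f 0 := by
          by_cases h00 : 0 < i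
          · simp [hg, h00]
          · have hi0 : i = 0 := by omega
            have : g 0 = f d := by simp [hg, h00]
            rw [this]
            have : d = j := by omega
            rw [this, ← hfij, hi0]
        have hlast : g (m - d) = f m := by
          have hnd : ¬ (m - d < i) := by omega
          have : g (m - d) = f (m - d + d) := by simp [hg, hnd]
          rw [this]
          congr 1
          omega
        have := IH (m - d) hlen g hchain
        rw [h0, hlast] at this
        exact dpath_mono (by omega) this
      case _ =>
        have hlt : j < i := by omega
        set d := i - j with hd
        have hd1 : 1 ≤ d := by omega
        set g : ℕ → V := fun t => if t < j then f t else f (t + d) with hg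
        have hlen : m - d < m := by omega
        have hchain : Chain o (m - d) g := by
          intro t ht
          by_cases h1 : t + 1 < j
          · have h0 : t < j := by omega
            simpa [hg, h0, h1] using hc t (by omega)
          · by_cases h0 : t < j
            · have h2 : t + 1 = j := by omega
              have e1 : g t = f t := by simp [hg, h0]
              have e2 : g (t+1) = f (t + 1) := by
                have : g (t+1) = f (t + 1 + d) := by simp [hg, h1]
                rw [this]
                have : t + 1 + d = i := by omega
                rw [this, hfij, h2]
              rw [e1, e2]; exact hc t (by omega)
            · have e1 : g t = f (t + d) := by simp [hg, h0]
              have e2 : g (t+1) = f (t + 1 + d) := by simp [hg, h1]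
              rw [e1, e2]
              have : t + d + 1 = t + 1 + d := by omega
              rw [← this]
              exact hc (t + d) (by omega)
        have h0 : g 0 = f 0 := by
          by_cases h00 : 0 < j
          · simp [hg, h00]
          · have hi0 : j = 0 := by omega
            have : g 0 = f d := by simp [hg, h00]
            rw [this]
            have : d = i := by omega
            rw [this, hfij, hi0]
        have hlast : g (m - d) = f m := by
          have hnd : ¬ (m - d < j) := by omega
          have : g (m - d) = f (m - d + d) := by simp [hg, hnd]
          rw [this]
          congr 1
          omega
        have := IH (m - d) hlen g hchain
        rw [h0, hlast] at this
        exact dpath_mono (by omega) this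

lemma dw_to_dpath {o : V → V → Prop} {n : ℕ} {x y : V}
    (h : ∃ m, m ≤ n ∧ ∃ f : ℕ → V, f 0 = x ∧ f m = y ∧ Chain o m f) : DPathLE o n x y := by
  obtain ⟨m, hm, f, h1, h2, h3⟩ := h
  have := chain_to_dpath m f h3
  rw [h1, h2] at this
  exact dpath_mono hm this


lemma dw_to_dpath' {o : V → V → Prop} {n : ℕ} {x y : V} (h : DW o n x y) :
    DPathLE o n x y := dw_to_dpath h

lemma chain_take {R : V → V → Prop} {m : ℕ} {f : ℕ → V} (hc : Chain R m f) {k : ℕ}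
    (h : k ≤ m) : Chain R k f := fun i hi => hc i (by omega)

/-- The relation of `G`-adjacency avoiding traversal of the edge `{x, y}`. -/
def AvoidRel (G : SimpleGraph V) (x y : V) (a b : V) : Prop :=
  G.Adj a b ∧ ¬(a = x ∧ b = y) ∧ ¬(a = y ∧ b = x)

lemma avoidRel_symm {G : SimpleGraph V} {x y a b : V} (h : AvoidRel G x y a b) :
    AvoidRel G x y b a := ⟨h.1.symm, fun hh => h.2.2 ⟨hh.2, hh.1⟩, fun hh => h.2.1 ⟨hh.2, hh.1⟩⟩

lemma walk_edges_eq {G : SimpleGraph V} {a b : V} (w : G.Walk a b) :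
    w.edges = (List.range w.length).map (fun i => s(w.getVert i, w.getVert (i+1))) := by
  induction w with
  | nil => simp
  | cons h p ih =>
    rw [SimpleGraph.Walk.edges_cons, ih]
    rw [SimpleGraph.Walk.length_cons, List.range_succ_eq_map]
    rw [List.map_cons, List.map_map]
    congr 1
    simp [SimpleGraph.Walk.getVert_cons_succ, SimpleGraph.Walk.getVert_zero]

lemma walk_edge_index {G : SimpleGraph V} {a b : V} (w : G.Walk a b) {e : Sym2 V}
    (he : e ∈ w.edges) : ∃ j < w.length, s(w.getVert j, w.getVert (j+1)) = e := by
  rw [walk_edges_eq] at he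
  simp only [List.mem_map, List.mem_range] at he
  obtain ⟨j, hj, hje⟩ := he
  exact ⟨j, hj, hje⟩

lemma walk_edge_index_unique {G : SimpleGraph V} {a b : V} (w : G.Walk a b)
    (hnd : w.edges.Nodup) {i j : ℕ} (hi : i < w.length) (hj : j < w.length)
    (hij : s(w.getVert i, w.getVert (i+1)) = s(w.getVert j, w.getVert (j+1))) : i = j := by
  rw [walk_edges_eq] at hnd
  by_contra hne
  have h1 := List.Nodup.getElem_inj_iff hnd
    (i := i) (j := j) (hi := by simpa using hi) (hj := by simpa using hj)
  simp only [List.getElem_map, List.getElem_range] at h1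
  exact hne (h1.mp hij)

/-- From a short cycle through an edge, get a short walk between its ends avoiding the edge. -/
lemma exists_avoid_walk {G : SimpleGraph V} {η : ℕ} {x y : V}
    (hc : InCycleLE G s(x, y) η) :
    ∃ m, m ≤ η - 1 ∧ ∃ f : ℕ → V, f 0 = y ∧ f m = x ∧ Chain (AvoidRel G x y) m f := by
  obtain ⟨v, c, hcyc, he, hlen⟩ := hc
  set m := c.length with hm
  have hm3 : 3 ≤ m := hcyc.three_le_length
  set gv : ℕ → V := fun i => c.getVert i with hgv
  have hgv0 : gv 0 = v := c.getVert_zero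
  have hgvm : gv m = v := c.getVert_length
  have hchain : Chain G.Adj m gv := fun i hi => c.adj_getVert_succ hi
  obtain ⟨j, hj, hje⟩ := walk_edge_index c he
  have hnd : c.edges.Nodup := hcyc.edges_nodup
  -- the wrapped walk
  set g : ℕ → V := fun i => gv ((j + 1 + i) % m) with hg
  have hmpos : 0 < m := by omega
  have gv_wrap : ∀ t : ℕ, t ≤ m → gv (t % m) = gv t := by
    intro t ht
    rcases Nat.lt_or_ge t m with h | h
    · rw [Nat.mod_eq_of_lt h]
    · have : t = m := by omega
      subst this
      rw [Nat.mod_self, hgv0, hgvm]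
  have hstep : ∀ i : ℕ, g (i + 1) = gv ((j + 1 + i) % m + 1) := by
    intro i
    have e1 : (j + 1 + (i+1)) % m = ((j + 1 + i) % m + 1) % m := by
      conv_lhs => rw [show j + 1 + (i+1) = (j + 1 + i) + 1 by omega]
      rw [Nat.add_mod (j+1+i) 1 m, Nat.mod_eq_of_lt (show 1 < m by omega)]
    have h2 : (j + 1 + i) % m + 1 ≤ m := Nat.mod_lt _ (by omega)
    show gv ((j + 1 + (i+1)) % m) = gv ((j + 1 + i) % m + 1)
    rw [e1, gv_wrap _ h2]
  have hgchain : Chain (AvoidRel G x y) (m - 1) g := by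
    intro i hi
    set a := (j + 1 + i) % m with ha
    have haltm : a < m := Nat.mod_lt _ (by omega)
    have hga : g i = gv a := rfl
    have hga1 : g (i + 1) = gv (a + 1) := hstep i
    rw [hga, hga1]
    have hadj : G.Adj (gv a) (gv (a + 1)) := hchain a haltm
    refine ⟨hadj, ?_, ?_⟩
    · -- not the forbidden edge, direction 1
      intro ⟨h1, h2⟩
      have : s(gv a, gv (a+1)) = s(gv j, gv (j+1)) := by rw [h1, h2, hje]
      have haj : a = j := walk_edge_index_unique c hnd haltm hj this
      rw [ha] at haj
      -- (j+1+i) % m = j with i < m - 1 : impossible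
      rcases Nat.lt_or_ge (j + 1 + i) m with h | h
      · rw [Nat.mod_eq_of_lt h] at haj; omega
      · have hb : j + 1 + i - m < m := by omega
        have : (j + 1 + i) % m = j + 1 + i - m := by
          rw [Nat.mod_eq_sub_mod h, Nat.mod_eq_of_lt hb]
        omega
    · intro ⟨h1, h2⟩
      have : s(gv a, gv (a+1)) = s(gv j, gv (j+1)) := by
        rw [h1, h2, Sym2.eq_swap, hje]
      have haj : a = j := walk_edge_index_unique c hnd haltm hj this
      rw [ha] at haj
      rcases Nat.lt_or_ge (j + 1 + i) m with h | h
      · rw [Nat.mod_eq_of_lt h] at haj; omega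
      · have hb : j + 1 + i - m < m := by omega
        have : (j + 1 + i) % m = j + 1 + i - m := by
          rw [Nat.mod_eq_sub_mod h, Nat.mod_eq_of_lt hb]
        omega
  have hg0 : g 0 = gv (j + 1) := by
    show gv ((j + 1 + 0) % m) = gv (j + 1)
    rw [Nat.add_zero]
    exact gv_wrap _ (by omega)
  have hglast : g (m - 1) = gv j := by
    show gv ((j + 1 + (m - 1)) % m) = gv j
    have h1 : j + 1 + (m - 1) = j + m := by omega
    rw [h1, Nat.add_mod_right, Nat.mod_eq_of_lt hj]
  -- now case on the labeling of the edge
  have hlab : (gv j = x ∧ gv (j+1) = y) ∨ (gv j = y ∧ gv (j+1) = x) := by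
    rw [Sym2.eq_iff] at hje
    tauto
  rcases hlab with ⟨hx, hy⟩ | ⟨hy, hx⟩
  · -- g goes from y to x : use it directly
    refine ⟨m - 1, by omega, g, by rw [hg0, hy], by rw [hglast, hx], hgchain⟩
  · -- g goes from x to y : reverse it
    refine ⟨m - 1, by omega, fun i => g (m - 1 - i), ?_, ?_, ?_⟩
    · simp only [Nat.sub_zero]; rw [hglast, hy]
    · simp only [Nat.sub_self]; rw [hg0, hx]
    · intro i hi
      have h1 : m - 1 - i - 1 + 1 = m - 1 - i := by omega
      have h2 : m - 1 - (i+1) = m - 1 - i - 1 := by omega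
      have := hgchain (m - 1 - i - 1) (by omega)
      rw [h1] at this
      show AvoidRel G x y (g (m - 1 - i)) (g (m - 1 - (i+1)))
      rw [h2]
      exact avoidRel_symm this
/-- Midpoint lemma: a minimal walk from `v` to `A` avoiding an edge `sv` into `A`
has length at most `2r` when every vertex has a walk of length `≤ r` into `A`. -/
lemma min_avoid_le_two_r {G : SimpleGraph V} {A : Set V} {r : ℕ}
    (hball : ∀ w : V, ∃ m, m ≤ r ∧ ∃ f : ℕ → V, f 0 = w ∧ f m ∈ A ∧ Chain G.Adj m f)
    {s v : V} (hs : s ∈ A) {ℓ : ℕ}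
    (hP : ∃ f : ℕ → V, f 0 = v ∧ f ℓ ∈ A ∧ Chain (AvoidRel G s v) ℓ f)
    (hmin : ∀ k < ℓ, ¬ ∃ f : ℕ → V, f 0 = v ∧ f k ∈ A ∧ Chain (AvoidRel G s v) k f) :
    ℓ ≤ 2 * r := by
  classical
  by_contra hcon
  push_neg at hcon
  obtain ⟨f, hf0, hfA, hfc⟩ := hP
  have hrl : r < ℓ := by omega
  obtain ⟨m, hmr, g, hg0, hgA, hgc⟩ := hball (f r)
  -- first hit of A along g
  have hexA : ∃ t, g t ∈ A := ⟨m, hgA⟩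
  set t₁ := Nat.find hexA with ht₁
  have ht₁A : g t₁ ∈ A := Nat.find_spec hexA
  have ht₁min : ∀ i < t₁, g i ∉ A := fun i hi => Nat.find_min hexA hi
  have ht₁m : t₁ ≤ m := Nat.find_le hgA
  by_cases htrav : ∃ k, k < t₁ ∧ ((g k = s ∧ g (k+1) = v) ∨ (g k = v ∧ g (k+1) = s))
  · -- the walk g uses the forbidden edge: get a short avoiding walk from v
    set T := Nat.find htrav with hT
    obtain ⟨hTt₁, hTtrav⟩ := Nat.find_spec htrav
    have hTmin : ∀ k < T, ¬(k < t₁ ∧ ((g k = s ∧ g (k+1) = v) ∨ (g k = v ∧ g (k+1) = s))) :=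
      fun k hk => Nat.find_min htrav hk
    have hgTne : g T ∉ A := ht₁min T hTt₁
    have hgTv : g T = v ∧ g (T+1) = s := by
      rcases hTtrav with ⟨h1, _⟩ | h2
      · exact absurd (h1 ▸ hs) hgTne
      · exact h2
    have hpre : Chain (AvoidRel G s v) T g := by
      intro k hk
      refine ⟨hgc k (by omega), ?_, ?_⟩
      · intro hh
        exact hTmin k hk ⟨by omega, Or.inl hh⟩
      · intro hh
        exact hTmin k hk ⟨by omega, Or.inr hh⟩
    -- reverse prefix: from v to f r
    have hrev : Chain (AvoidRel G s v) T (fun t => g (T - t)) :=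
      chain_rev (fun a b => avoidRel_symm) hpre
    have hsuf : Chain (AvoidRel G s v) (ℓ - r) (fun i => f (r + i)) :=
      chain_shift hfc r (ℓ - r) (by omega)
    have hbd : (fun t => g (T - t)) T = (fun i => f (r + i)) 0 := by
      simp only [Nat.sub_self]
      rw [hg0]
      simp
    have hspl := chain_splice hrev hsuf hbd
    refine hmin (T + (ℓ - r)) (by omega) ⟨splice (fun t => g (T - t)) T (fun i => f (r + i)), ?_, ?_, hspl⟩
    · rw [splice_zero (fun t => g (T - t)) T (fun i => f (r + i)) hbd]
      simpa using hgTv.1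
    · rw [splice_last (fun t => g (T - t)) T (ℓ - r) (fun i => f (r + i)) hbd]
      have : r + (ℓ - r) = ℓ := by omega
      simpa [this] using hfA
  · -- g avoids the forbidden edge up to t₁
    push_neg at htrav
    have hgc' : Chain (AvoidRel G s v) t₁ g := by
      intro k hk
      refine ⟨hgc k (by omega), ?_, ?_⟩
      · intro ⟨h1, h2⟩
        exact (htrav k hk).1 h1 h2
      · intro ⟨h1, h2⟩
        exact (htrav k hk).2 h1 h2
    have hbd : f r = g 0 := by rw [hg0]
    have hspl := chain_splice (chain_take hfc (le_of_lt hrl)) hgc' hbd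
    refine hmin (r + t₁) (by omega) ⟨splice f r g, ?_, ?_, hspl⟩
    · rw [splice_zero _ _ _ hbd, hf0]
    · rw [splice_last _ _ _ _ hbd]
      exact ht₁A
/-- The invariant maintained during one covering stage. -/
def Inv (G : SimpleGraph V) (A : Set V) (M : ℕ) (o₀ : V → V → Prop)
    (A₁ : Set V) (o : V → V → Prop) : Prop :=
  A ⊆ A₁ ∧
  (∀ a b, o a b → G.Adj a b) ∧
  (∀ a b, o a b → ¬ o b a) ∧
  (∀ a b, o a b → a ∈ A₁ ∧ b ∈ A₁) ∧
  (∀ a b, o₀ a b → o a b) ∧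
  (∀ z ∈ A₁, ∃ s₁ ∈ A, ∃ s₂ ∈ A, ∃ p q : ℕ, p ≤ M ∧ q ≤ M ∧ p + q ≤ M + 1 ∧
    DW o p s₁ z ∧ DW o q z s₂ ∧
    ∀ n : ℕ, (∃ f : ℕ → V, f 0 = z ∧ f n ∈ A ∧ Chain G.Adj n f) → min p q ≤ n)

lemma earStep {G : SimpleGraph V} {A : Set V} {r η : ℕ}
    (hball : ∀ w : V, ∃ m, m ≤ r ∧ ∃ f : ℕ → V, f 0 = w ∧ f m ∈ A ∧ Chain G.Adj m f)
    (hcycG : ∀ x y : V, G.Adj x y →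
      ∃ m, m ≤ η - 1 ∧ ∃ f : ℕ → V, f 0 = y ∧ f m = x ∧ Chain (AvoidRel G x y) m f)
    {o₀ : V → V → Prop} {A₁ : Set V} {o : V → V → Prop}
    (hInv : Inv G A (min (2*r) (η-1)) o₀ A₁ o)
    {s v : V} (hs : s ∈ A) (hv : v ∉ A₁) (hadj : G.Adj s v) :
    ∃ (A₂ : Set V) (o₂ : V → V → Prop), Inv G A (min (2*r) (η-1)) o₀ A₂ o₂ ∧
      A₁ ⊆ A₂ ∧ (∀ a b, o a b → o₂ a b) ∧ v ∈ A₂ := by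
  classical
  obtain ⟨hA1, hoadj, hoas, hodom, ho0, hβ⟩ := hInv
  set Rv := AvoidRel G s v with hRvdef
  have hRsym : ∀ a b : V, Rv a b → Rv b a := fun a b h => avoidRel_symm h
  have hRadj : ∀ a b : V, Rv a b → G.Adj a b := fun a b h => h.1
  have hPex : ∃ m, ∃ f : ℕ → V, f 0 = v ∧ f m ∈ A ∧ Chain Rv m f := by
    obtain ⟨m, hm, f, h1, h2, h3⟩ := hcycG s v hadj
    exact ⟨m, f, h1, by rw [h2]; exact hs, h3⟩
  obtain ⟨ℓ, ⟨f, hf0, hfA, hfc⟩, hlmin⟩ :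
      ∃ ℓ, (∃ f : ℕ → V, f 0 = v ∧ f ℓ ∈ A ∧ Chain Rv ℓ f) ∧
        (∀ k < ℓ, ¬ ∃ g : ℕ → V, g 0 = v ∧ g k ∈ A ∧ Chain Rv k g) :=
    ⟨Nat.find hPex, Nat.find_spec hPex, fun k hk => Nat.find_min hPex hk⟩
  have hl_eta : ℓ ≤ η - 1 := by
    by_contra hcon
    push_neg at hcon
    obtain ⟨m, hm, g, h1, h2, h3⟩ := hcycG s v hadj
    exact hlmin m (by omega) ⟨g, h1, by rw [h2]; exact hs, h3⟩
  have hl_2r : ℓ ≤ 2 * r := min_avoid_le_two_r hball hs ⟨f, hf0, hfA, hfc⟩ hlmin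
  have hlM : ℓ ≤ min (2*r) (η-1) := le_min hl_2r hl_eta
  -- prefix minimality
  have F3 : ∀ i ≤ ℓ, ∀ k, (∃ g : ℕ → V, g 0 = v ∧ g k = f i ∧ Chain Rv k g) → i ≤ k := by
    rintro i hi k ⟨g, hg0, hgk, hgc⟩
    by_contra hik
    push_neg at hik
    have hbd : g k = (fun t => f (i + t)) 0 := by simpa using hgk
    have hsp := chain_splice hgc (chain_shift hfc i (ℓ - i) (by omega)) hbd
    refine hlmin (k + (ℓ - i)) (by omega) ⟨splice g k (fun t => f (i + t)), ?_, ?_, hsp⟩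
    · rw [splice_zero g k (fun t => f (i + t)) hbd]; exact hg0
    · rw [splice_last g k (ℓ - i) (fun t => f (i + t)) hbd]
      have : i + (ℓ - i) = ℓ := by omega
      simpa [this] using hfA
  -- suffix minimality
  have F4 : ∀ i ≤ ℓ, ∀ k, (∃ g : ℕ → V, g 0 = f i ∧ g k ∈ A ∧ Chain Rv k g) → ℓ - i ≤ k := by
    rintro i hi k ⟨g, hg0, hgk, hgc⟩
    by_contra hik
    push_neg at hik
    have hbd : f i = g 0 := hg0.symm
    have hsp := chain_splice (chain_take hfc hi) hgc hbd
    exact hlmin (i + k) (by omega) ⟨splice f i g,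
      by rw [splice_zero f i g hbd]; exact hf0,
      by rw [splice_last f i k g hbd]; exact hgk, hsp⟩
  -- injectivity
  have F5aux : ∀ a b, a < b → b ≤ ℓ → f a ≠ f b := by
    intro a b hab hb hfab
    have hbd : f a = (fun t => f (b + t)) 0 := by simpa using hfab
    have hsp := chain_splice (chain_take hfc (show a ≤ ℓ by omega))
      (chain_shift hfc b (ℓ - b) (by omega)) hbd
    refine hlmin (a + (ℓ - b)) (by omega) ⟨splice f a (fun t => f (b + t)), ?_, ?_, hsp⟩
    · rw [splice_zero f a (fun t => f (b + t)) hbd]; exact hf0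
    · rw [splice_last f a (ℓ - b) (fun t => f (b + t)) hbd]
      have : b + (ℓ - b) = ℓ := by omega
      simpa [this] using hfA
  have F5 : ∀ a ≤ ℓ, ∀ b ≤ ℓ, f a = f b → a = b := by
    intro a ha b hb hfab
    by_contra hne
    rcases Nat.lt_or_ge a b with h | h
    · exact F5aux a b h hb hfab
    · exact F5aux b a (by omega) ha hfab.symm
  -- first hit of A₁
  have hexA1 : ∃ t, f t ∈ A₁ := ⟨ℓ, hA1 hfA⟩
  obtain ⟨t₀, hzA1, hbefore, ht₀l⟩ :
      ∃ t₀, f t₀ ∈ A₁ ∧ (∀ i < t₀, f i ∉ A₁) ∧ t₀ ≤ ℓ :=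
    ⟨Nat.find hexA1, Nat.find_spec hexA1, fun i hi => Nat.find_min hexA1 hi,
      Nat.find_le (hA1 hfA)⟩
  have ht₀1 : 1 ≤ t₀ := by
    rcases Nat.eq_zero_or_pos t₀ with h | h
    · exact absurd (by rwa [h, hf0] at hzA1) hv
    · exact h
  have hl1 : 1 ≤ ℓ := le_trans ht₀1 ht₀l
  have hf1s : ¬ (f 0 = v ∧ f 1 = s) := (hfc 0 (by omega)).2.2
  -- invariant data at the attachment vertex z = f t₀
  obtain ⟨s₁, hs₁, s₂, hs₂, p, q, hp, hq, hpq, hDp, hDq, hminpq⟩ := hβ _ hzA1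
  have hminzA : min p q ≤ ℓ - t₀ := by
    refine hminpq (ℓ - t₀) ⟨fun i => f (t₀ + i), by simp, ?_, ?_⟩
    · have : t₀ + (ℓ - t₀) = ℓ := by omega
      simpa [this] using hfA
    · exact chain_mono hRadj (chain_shift hfc t₀ (ℓ - t₀) (by omega))
  by_cases hqp : q ≤ p
  · -- FORWARD orientation of the ear
    have hqlt : q ≤ ℓ - t₀ := by
      have := hminzA
      rwa [min_eq_right hqp] at this
    set o₂ : V → V → Prop :=
      fun a b => o a b ∨ (a = s ∧ b = v) ∨ (∃ i, i < t₀ ∧ a = f i ∧ b = f (i+1)) with ho₂def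
    set A₂ : Set V := A₁ ∪ {w | ∃ i, i ≤ t₀ ∧ w = f i} with hA₂def
    have hoo₂ : ∀ a b, o a b → o₂ a b := fun a b h => Or.inl h
    have hA₁₂ : A₁ ⊆ A₂ := fun w hw => Or.inl hw
    refine ⟨A₂, o₂, ⟨fun w hw => hA₁₂ (hA1 hw), ?_, ?_, ?_, fun a b h => Or.inl (ho0 a b h), ?_⟩,
      hA₁₂, hoo₂, Or.inr ⟨0, by omega, hf0.symm⟩⟩
    · -- adjacency
      rintro a b (h | ⟨ha, hb⟩ | ⟨i, hi, ha, hb⟩)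
      · exact hoadj a b h
      · rw [ha, hb]; exact hadj
      · rw [ha, hb]; exact (hfc i (by omega)).1
    · -- antisymmetry
      rintro a b (h | ⟨ha, hb⟩ | ⟨i, hi, ha, hb⟩) hcon
      · rcases hcon with h' | ⟨h1, h2⟩ | ⟨j, hj, h3, h4⟩
        · exact hoas a b h h'
        · exact hv (h2 ▸ (hodom a b h).1)
        · exact hbefore j hj (h3 ▸ (hodom a b h).2)
      · rcases hcon with h' | ⟨h1, h2⟩ | ⟨j, hj, h3, h4⟩
        · exact hv (hb ▸ (hodom b a h').1)
        · exact hadj.ne (ha.symm.trans h2)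
        · have hj0 : j = 0 := F5 j (by omega) 0 (by omega) ((h3.symm.trans hb).trans hf0.symm)
          have h5 : f (j+1) = s := h4.symm.trans ha
          rw [hj0] at h5
          exact hf1s ⟨hf0, by simpa using h5⟩
      · rcases hcon with h' | ⟨h1, h2⟩ | ⟨j, hj, h3, h4⟩
        · exact hbefore i hi (ha ▸ (hodom b a h').2)
        · have hi0 : i = 0 := F5 i (by omega) 0 (by omega) ((ha.symm.trans h2).trans hf0.symm)
          have h5 : f (i+1) = s := hb.symm.trans h1
          rw [hi0] at h5
          exact hf1s ⟨hf0, by simpa using h5⟩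
        · have e1 : i = j + 1 := F5 i (by omega) (j+1) (by omega) (ha.symm.trans h4)
          have e2 : i + 1 = j := F5 (i+1) (by omega) j (by omega) (hb.symm.trans h3)
          omega
    · -- domain
      rintro a b (h | ⟨ha, hb⟩ | ⟨i, hi, ha, hb⟩)
      · exact ⟨hA₁₂ (hodom a b h).1, hA₁₂ (hodom a b h).2⟩
      · exact ⟨hA₁₂ (hA1 (ha ▸ hs)), Or.inr ⟨0, by omega, hb.trans hf0.symm⟩⟩
      · exact ⟨Or.inr ⟨i, by omega, ha⟩, Or.inr ⟨i+1, by omega, hb⟩⟩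
    · -- the β-invariant
      rintro z' (hz' | ⟨i, hi, rfl⟩)
      · obtain ⟨t₁, ht₁, t₂, ht₂, p', q', h1, h2, h3, h4, h5, h6⟩ := hβ _ hz'
        exact ⟨t₁, ht₁, t₂, ht₂, p', q', h1, h2, h3, h4.mono_o hoo₂, h5.mono_o hoo₂, h6⟩
      · by_cases hfi : f i ∈ A₁
        · obtain ⟨t₁, ht₁, t₂, ht₂, p', q', h1, h2, h3, h4, h5, h6⟩ := hβ _ hfi
          exact ⟨t₁, ht₁, t₂, ht₂, p', q', h1, h2, h3, h4.mono_o hoo₂, h5.mono_o hoo₂, h6⟩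
        · have hit : i < t₀ := by
            rcases Nat.lt_or_ge i t₀ with h | h
            · exact h
            · have : i = t₀ := by omega
              exact absurd (this ▸ hzA1) hfi
          refine ⟨s, hs, s₂, hs₂, i + 1, (t₀ - i) + q, by omega, by omega, by omega, ?_, ?_, ?_⟩
          · -- directed walk from s to f i
            have h1 : DW o₂ 1 s v := DW.single (Or.inr (Or.inl ⟨rfl, rfl⟩))
            have h2 : DW o₂ i v (f i) := by
              refine ⟨i, le_rfl, f, hf0, rfl, ?_⟩
              intro k hk
              exact Or.inr (Or.inr ⟨k, by omega, rfl, rfl⟩)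
            have h3 := h1.trans h2
            rwa [show 1 + i = i + 1 by omega] at h3
          · -- directed walk from f i to s₂
            have hseg : DW o₂ (t₀ - i) (f i) (f t₀) := by
              refine ⟨t₀ - i, le_rfl, fun k => f (i + k), by simp,
                by show f (i + (t₀ - i)) = f t₀; congr 1; omega, ?_⟩
              intro k hk
              show o₂ (f (i + k)) (f (i + (k+1)))
              refine Or.inr (Or.inr ⟨i + k, by omega, rfl, by congr 1 <;> omega⟩)
            exact hseg.trans (hDq.mono_o hoo₂)
          · -- distance lower bound
            intro n ⟨g, hg0, hgA, hgc⟩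
            have hexA2 : ∃ t, g t ∈ A := ⟨n, hgA⟩
            obtain ⟨t₁, ht₁A, ht₁min, ht₁n⟩ :
                ∃ t₁, g t₁ ∈ A ∧ (∀ i' < t₁, g i' ∉ A) ∧ t₁ ≤ n :=
              ⟨Nat.find hexA2, Nat.find_spec hexA2,
                fun i' hi' => Nat.find_min hexA2 hi', Nat.find_le hgA⟩
            by_cases htrav : ∃ k, k < t₁ ∧ ((g k = s ∧ g (k+1) = v) ∨ (g k = v ∧ g (k+1) = s))
            · obtain ⟨T, hTt₁, hTtrav, hTmin⟩ :
                  ∃ T, T < t₁ ∧ ((g T = s ∧ g (T+1) = v) ∨ (g T = v ∧ g (T+1) = s)) ∧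
                    ∀ k < T, ¬(k < t₁ ∧ ((g k = s ∧ g (k+1) = v) ∨ (g k = v ∧ g (k+1) = s))) :=
                ⟨Nat.find htrav, (Nat.find_spec htrav).1, (Nat.find_spec htrav).2,
                  fun k hk => Nat.find_min htrav hk⟩
              have hgTv : g T = v ∧ g (T+1) = s := by
                rcases hTtrav with ⟨h1, _⟩ | h2
                · exact absurd (h1 ▸ hs) (ht₁min T hTt₁)
                · exact h2
              have hpre : Chain Rv T g := by
                intro k hk
                refine ⟨hgc k (by omega), ?_, ?_⟩
                · intro hh; exact (hTmin k hk) ⟨by omega, Or.inl hh⟩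
                · intro hh; exact (hTmin k hk) ⟨by omega, Or.inr hh⟩
              have hrev : Chain Rv T (fun t => g (T - t)) := chain_rev hRsym hpre
              have hiT : i ≤ T := by
                refine F3 i (by omega) T ⟨fun t => g (T - t), ?_, ?_, hrev⟩
                · simpa using hgTv.1
                · simpa using hg0
              exact le_trans (min_le_left _ _) (by omega)
            · push_neg at htrav
              have hgc' : Chain Rv t₁ g := by
                intro k hk
                refine ⟨hgc k (by omega), ?_, ?_⟩
                · intro ⟨h1, h2⟩; exact (htrav k hk).1 h1 h2
                · intro ⟨h1, h2⟩; exact (htrav k hk).2 h1 h2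
              have hF4 := F4 i (by omega) t₁ ⟨g, hg0, ht₁A, hgc'⟩
              exact le_trans (min_le_right _ _) (by omega)
  · -- BACKWARD orientation of the ear
    push_neg at hqp
    have hplt : p ≤ ℓ - t₀ := by
      have := hminzA
      rwa [min_eq_left (le_of_lt hqp)] at this
    set o₂ : V → V → Prop :=
      fun a b => o a b ∨ (a = v ∧ b = s) ∨ (∃ i, i < t₀ ∧ a = f (i+1) ∧ b = f i) with ho₂def
    set A₂ : Set V := A₁ ∪ {w | ∃ i, i ≤ t₀ ∧ w = f i} with hA₂def
    have hoo₂ : ∀ a b, o a b → o₂ a b := fun a b h => Or.inl h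
    have hA₁₂ : A₁ ⊆ A₂ := fun w hw => Or.inl hw
    refine ⟨A₂, o₂, ⟨fun w hw => hA₁₂ (hA1 hw), ?_, ?_, ?_, fun a b h => Or.inl (ho0 a b h), ?_⟩,
      hA₁₂, hoo₂, Or.inr ⟨0, by omega, hf0.symm⟩⟩
    · rintro a b (h | ⟨ha, hb⟩ | ⟨i, hi, ha, hb⟩)
      · exact hoadj a b h
      · rw [ha, hb]; exact hadj.symm
      · rw [ha, hb]; exact ((hfc i (by omega)).1).symm
    · rintro a b (h | ⟨ha, hb⟩ | ⟨i, hi, ha, hb⟩) hcon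
      · rcases hcon with h' | ⟨h1, h2⟩ | ⟨j, hj, h3, h4⟩
        · exact hoas a b h h'
        · exact hv (h1 ▸ (hodom a b h).2)
        · exact hbefore j hj (h4 ▸ (hodom a b h).1)
      · rcases hcon with h' | ⟨h1, h2⟩ | ⟨j, hj, h3, h4⟩
        · exact hv (ha ▸ (hodom b a h').2)
        · exact hadj.ne (h2.symm.trans ha)
        · have hj0 : j = 0 := F5 j (by omega) 0 (by omega) ((h4.symm.trans ha).trans hf0.symm)
          have h5 : f (j+1) = s := h3.symm.trans hb
          rw [hj0] at h5
          exact hf1s ⟨hf0, by simpa using h5⟩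
      · rcases hcon with h' | ⟨h1, h2⟩ | ⟨j, hj, h3, h4⟩
        · exact hbefore i hi (hb ▸ (hodom b a h').1)
        · have hi0 : i = 0 := F5 i (by omega) 0 (by omega) ((hb.symm.trans h1).trans hf0.symm)
          have h5 : f (i+1) = s := ha.symm.trans h2
          rw [hi0] at h5
          exact hf1s ⟨hf0, by simpa using h5⟩
        · have e1 : i = j + 1 := F5 i (by omega) (j+1) (by omega) (hb.symm.trans h3)
          have e2 : i + 1 = j := F5 (i+1) (by omega) j (by omega) (ha.symm.trans h4)
          omega
    · rintro a b (h | ⟨ha, hb⟩ | ⟨i, hi, ha, hb⟩)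
      · exact ⟨hA₁₂ (hodom a b h).1, hA₁₂ (hodom a b h).2⟩
      · exact ⟨Or.inr ⟨0, by omega, ha.trans hf0.symm⟩, hA₁₂ (hA1 (hb ▸ hs))⟩
      · exact ⟨Or.inr ⟨i+1, by omega, ha⟩, Or.inr ⟨i, by omega, hb⟩⟩
    · rintro z' (hz' | ⟨i, hi, rfl⟩)
      · obtain ⟨t₁, ht₁, t₂, ht₂, p', q', h1, h2, h3, h4, h5, h6⟩ := hβ _ hz'
        exact ⟨t₁, ht₁, t₂, ht₂, p', q', h1, h2, h3, h4.mono_o hoo₂, h5.mono_o hoo₂, h6⟩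
      · by_cases hfi : f i ∈ A₁
        · obtain ⟨t₁, ht₁, t₂, ht₂, p', q', h1, h2, h3, h4, h5, h6⟩ := hβ _ hfi
          exact ⟨t₁, ht₁, t₂, ht₂, p', q', h1, h2, h3, h4.mono_o hoo₂, h5.mono_o hoo₂, h6⟩
        · have hit : i < t₀ := by
            rcases Nat.lt_or_ge i t₀ with h | h
            · exact h
            · have : i = t₀ := by omega
              exact absurd (this ▸ hzA1) hfi
          refine ⟨s₁, hs₁, s, hs, p + (t₀ - i), i + 1, by omega, by omega, by omega, ?_, ?_, ?_⟩
          · -- directed walk from s₁ to f i (via z, backwards along the ear)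
            have hseg : DW o₂ (t₀ - i) (f t₀) (f i) := by
              refine ⟨t₀ - i, le_rfl, fun k => f (t₀ - k), by simp,
                by show f (t₀ - (t₀ - i)) = f i; congr 1; omega, ?_⟩
              intro k hk
              show o₂ (f (t₀ - k)) (f (t₀ - (k+1)))
              refine Or.inr (Or.inr ⟨t₀ - k - 1, by omega, by congr 1; omega, by congr 1 <;> omega⟩)
            exact (hDp.mono_o hoo₂).trans hseg
          · -- directed walk from f i to s
            have h2 : DW o₂ i (f i) v := by
              refine ⟨i, le_rfl, fun k => f (i - k), by simp, by simpa using hf0, ?_⟩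
              intro k hk
              show o₂ (f (i - k)) (f (i - (k+1)))
              refine Or.inr (Or.inr ⟨i - k - 1, by omega, by congr 1; omega, by congr 1 <;> omega⟩)
            have h1 : DW o₂ 1 v s := DW.single (Or.inr (Or.inl ⟨rfl, rfl⟩))
            exact h2.trans h1
          · intro n ⟨g, hg0, hgA, hgc⟩
            have hexA2 : ∃ t, g t ∈ A := ⟨n, hgA⟩
            obtain ⟨t₁, ht₁A, ht₁min, ht₁n⟩ :
                ∃ t₁, g t₁ ∈ A ∧ (∀ i' < t₁, g i' ∉ A) ∧ t₁ ≤ n :=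
              ⟨Nat.find hexA2, Nat.find_spec hexA2,
                fun i' hi' => Nat.find_min hexA2 hi', Nat.find_le hgA⟩
            by_cases htrav : ∃ k, k < t₁ ∧ ((g k = s ∧ g (k+1) = v) ∨ (g k = v ∧ g (k+1) = s))
            · obtain ⟨T, hTt₁, hTtrav, hTmin⟩ :
                  ∃ T, T < t₁ ∧ ((g T = s ∧ g (T+1) = v) ∨ (g T = v ∧ g (T+1) = s)) ∧
                    ∀ k < T, ¬(k < t₁ ∧ ((g k = s ∧ g (k+1) = v) ∨ (g k = v ∧ g (k+1) = s))) :=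
                ⟨Nat.find htrav, (Nat.find_spec htrav).1, (Nat.find_spec htrav).2,
                  fun k hk => Nat.find_min htrav hk⟩
              have hgTv : g T = v ∧ g (T+1) = s := by
                rcases hTtrav with ⟨h1, _⟩ | h2
                · exact absurd (h1 ▸ hs) (ht₁min T hTt₁)
                · exact h2
              have hpre : Chain Rv T g := by
                intro k hk
                refine ⟨hgc k (by omega), ?_, ?_⟩
                · intro hh; exact (hTmin k hk) ⟨by omega, Or.inl hh⟩
                · intro hh; exact (hTmin k hk) ⟨by omega, Or.inr hh⟩
              have hrev : Chain Rv T (fun t => g (T - t)) := chain_rev hRsym hpre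
              have hiT : i ≤ T := by
                refine F3 i (by omega) T ⟨fun t => g (T - t), ?_, ?_, hrev⟩
                · simpa using hgTv.1
                · simpa using hg0
              exact le_trans (min_le_right _ _) (by omega)
            · push_neg at htrav
              have hgc' : Chain Rv t₁ g := by
                intro k hk
                refine ⟨hgc k (by omega), ?_, ?_⟩
                · intro ⟨h1, h2⟩; exact (htrav k hk).1 h1 h2
                · intro ⟨h1, h2⟩; exact (htrav k hk).2 h1 h2
              have hF4 := F4 i (by omega) t₁ ⟨g, hg0, ht₁A, hgc'⟩
              exact le_trans (min_le_left _ _) (by omega)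
lemma cover {G : SimpleGraph V} {A : Set V} {r η : ℕ} {o₀ : V → V → Prop}
    (hball : ∀ w : V, ∃ m, m ≤ r ∧ ∃ f : ℕ → V, f 0 = w ∧ f m ∈ A ∧ Chain G.Adj m f)
    (hcycG : ∀ x y : V, G.Adj x y →
      ∃ m, m ≤ η - 1 ∧ ∃ f : ℕ → V, f 0 = y ∧ f m = x ∧ Chain (AvoidRel G x y) m f) :
    ∀ (k : ℕ) (A₁ : Set V) (o : V → V → Prop), Inv G A (min (2*r) (η-1)) o₀ A₁ o →
      {y | y ∉ A₁ ∧ ∃ x ∈ A, G.Adj x y}.ncard ≤ k →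
      {y | y ∉ A₁ ∧ ∃ x ∈ A, G.Adj x y}.Finite →
      ∃ A₂ o₂, Inv G A (min (2*r) (η-1)) o₀ A₂ o₂ ∧ A₁ ⊆ A₂ ∧
        (∀ a b, o a b → o₂ a b) ∧ (∀ x y, G.Adj x y → x ∈ A → y ∈ A₂) := by
  intro k
  induction k with
  | zero =>
    intro A₁ o hInv hcard hfin
    refine ⟨A₁, o, hInv, subset_rfl, fun a b h => h, ?_⟩
    intro x y hxy hx
    by_contra hy
    have hmem : y ∈ {y | y ∉ A₁ ∧ ∃ x ∈ A, G.Adj x y} := ⟨hy, x, hx, hxy⟩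
    have := Set.ncard_eq_zero hfin |>.mp (by omega)
    rw [this] at hmem
    exact hmem
  | succ k IH =>
    intro A₁ o hInv hcard hfin
    by_cases hne : ∃ y, y ∉ A₁ ∧ ∃ x ∈ A, G.Adj x y
    · obtain ⟨v, hv, s, hsA, hadj⟩ := hne
      obtain ⟨A₂, o₂, hInv₂, h12, ho12, hvA₂⟩ := earStep hball hcycG hInv hsA hv hadj
      have hsub : {y | y ∉ A₂ ∧ ∃ x ∈ A, G.Adj x y} ⊆
          {y | y ∉ A₁ ∧ ∃ x ∈ A, G.Adj x y} \ {v} := by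
        rintro y ⟨hy2, hy3⟩
        refine ⟨⟨fun hy1 => hy2 (h12 hy1), hy3⟩, ?_⟩
        simp only [Set.mem_singleton_iff]
        rintro rfl
        exact hy2 hvA₂
      have hfin₁ : ({y | y ∉ A₁ ∧ ∃ x ∈ A, G.Adj x y} \ {v}).Finite := hfin.diff
      have hfin₂ : {y | y ∉ A₂ ∧ ∃ x ∈ A, G.Adj x y}.Finite := hfin₁.subset hsub
      have hlt : {y | y ∉ A₂ ∧ ∃ x ∈ A, G.Adj x y}.ncard ≤ k := by
        have h1 := Set.ncard_le_ncard hsub hfin₁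
        have h2 : ({y | y ∉ A₁ ∧ ∃ x ∈ A, G.Adj x y} \ {v}).ncard <
            {y | y ∉ A₁ ∧ ∃ x ∈ A, G.Adj x y}.ncard :=
          Set.ncard_diff_singleton_lt_of_mem ⟨hv, s, hsA, hadj⟩ hfin
        omega
      obtain ⟨A₃, o₃, hInv₃, h23, ho23, hfr⟩ := IH A₂ o₂ hInv₂ hlt hfin₂
      exact ⟨A₃, o₃, hInv₃, h12.trans h23, fun a b h => ho23 _ _ (ho12 _ _ h), hfr⟩
    · push_neg at hne
      refine ⟨A₁, o, hInv, subset_rfl, fun a b h => h, ?_⟩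
      intro x y hxy hx
      by_contra hy
      exact (hne y hy x hx) hxy

lemma stageA [Fintype V] {G : SimpleGraph V} {A : Set V} {r η : ℕ} {o₀ : V → V → Prop}
    (hball : ∀ w : V, ∃ m, m ≤ r ∧ ∃ f : ℕ → V, f 0 = w ∧ f m ∈ A ∧ Chain G.Adj m f)
    (hcycG : ∀ x y : V, G.Adj x y →
      ∃ m, m ≤ η - 1 ∧ ∃ f : ℕ → V, f 0 = y ∧ f m = x ∧ Chain (AvoidRel G x y) m f)
    (ho1 : ∀ a b, o₀ a b → G.Adj a b) (ho2 : ∀ a b, o₀ a b → ¬ o₀ b a)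
    (ho3 : ∀ a b, o₀ a b → a ∈ A ∧ b ∈ A)
    (ho4 : ∀ a b, G.Adj a b → a ∈ A → b ∈ A → o₀ a b ∨ o₀ b a) :
    ∃ (A' : Set V) (o' : V → V → Prop), A ⊆ A' ∧
      (∀ x y, G.Adj x y → x ∈ A → y ∈ A') ∧
      (∀ a b, o₀ a b → o' a b) ∧ (∀ a b, o' a b → G.Adj a b) ∧
      (∀ a b, o' a b → ¬ o' b a) ∧ (∀ a b, o' a b → a ∈ A' ∧ b ∈ A') ∧
      (∀ a b, G.Adj a b → a ∈ A' → b ∈ A' → o' a b ∨ o' b a) ∧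
      (∀ z ∈ A', ∃ s₁ ∈ A, ∃ s₂ ∈ A,
        DW o' (min (2*r) (η-1)) s₁ z ∧ DW o' (min (2*r) (η-1)) z s₂) := by
  classical
  have hInv₀ : Inv G A (min (2*r) (η-1)) o₀ A o₀ := by
    refine ⟨subset_rfl, ho1, ho2, ho3, fun a b h => h, ?_⟩
    intro z hz
    exact ⟨z, hz, z, hz, 0, 0, Nat.zero_le _, Nat.zero_le _, by omega,
      DW.refl _ _ _, DW.refl _ _ _, fun n _ => by omega⟩
  obtain ⟨A₂, o₂, hInv₂, hA12, ho02, hfr⟩ :=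
    cover hball hcycG {y | y ∉ A ∧ ∃ x ∈ A, G.Adj x y}.ncard A o₀ hInv₀ le_rfl
      (Set.toFinite _)
  obtain ⟨hA2, hadj2, has2, hdom2, h02, hβ2⟩ := hInv₂
  set enc : V → ℕ := fun x => ((Fintype.equivFin V) x : ℕ) with henc
  have hencinj : ∀ a b : V, enc a = enc b → a = b := by
    intro a b h
    have := Fin.val_injective h
    exact (Fintype.equivFin V).injective this
  set o' : V → V → Prop := fun a b => o₂ a b ∨
    (G.Adj a b ∧ a ∈ A₂ ∧ b ∈ A₂ ∧ ¬ o₂ a b ∧ ¬ o₂ b a ∧ enc a < enc b) with ho'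
  have hoo' : ∀ a b, o₂ a b → o' a b := fun a b h => Or.inl h
  refine ⟨A₂, o', hA2, hfr, fun a b h => Or.inl (h02 a b h), ?_, ?_, ?_, ?_, ?_⟩
  · rintro a b (h | ⟨h, _⟩)
    · exact hadj2 a b h
    · exact h
  · rintro a b (h | ⟨h1, h2, h3, h4, h5, h6⟩) hcon
    · rcases hcon with h' | ⟨_, _, _, _, h5', _⟩
      · exact has2 a b h h'
      · exact h5' h
    · rcases hcon with h' | ⟨_, _, _, _, _, h6'⟩
      · exact h5 h'
      · omega
  · rintro a b (h | ⟨_, h2, h3, _, _, _⟩)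
    · exact hdom2 a b h
    · exact ⟨h2, h3⟩
  · intro a b hab ha hb
    by_cases h1 : o₂ a b
    · exact Or.inl (Or.inl h1)
    by_cases h2 : o₂ b a
    · exact Or.inr (Or.inl h2)
    have hne : enc a ≠ enc b := fun h => hab.ne (hencinj a b h)
    rcases Nat.lt_or_ge (enc a) (enc b) with h | h
    · exact Or.inl (Or.inr ⟨hab, ha, hb, h1, h2, h⟩)
    · exact Or.inr (Or.inr ⟨hab.symm, hb, ha, h2, h1, by omega⟩)
  · intro z hz
    obtain ⟨s₁, hs₁, s₂, hs₂, p, q, hp, hq, _, hD1, hD2, _⟩ := hβ2 z hz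
    exact ⟨s₁, hs₁, s₂, hs₂, (hD1.mono_o hoo').mono_n hp, (hD2.mono_o hoo').mono_n hq⟩

lemma outer [Fintype V] {G : SimpleGraph V} {η : ℕ} (u : V)
    (hcycG : ∀ x y : V, G.Adj x y →
      ∃ m, m ≤ η - 1 ∧ ∃ f : ℕ → V, f 0 = y ∧ f m = x ∧ Chain (AvoidRel G x y) m f) :
    ∀ (r : ℕ) (A : Set V) (c : ℕ) (o₀ : V → V → Prop),
    (∀ a b, o₀ a b → G.Adj a b) → (∀ a b, o₀ a b → ¬ o₀ b a) →
    (∀ a b, o₀ a b → a ∈ A ∧ b ∈ A) →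
    (∀ a b, G.Adj a b → a ∈ A → b ∈ A → o₀ a b ∨ o₀ b a) →
    u ∈ A →
    (∀ a ∈ A, DW o₀ c u a ∧ DW o₀ c a u) →
    (∀ w, ∃ m, m ≤ r ∧ ∃ f : ℕ → V, f 0 = w ∧ f m ∈ A ∧ Chain G.Adj m f) →
    ∃ o : V → V → Prop,
      (∀ a b, o a b → G.Adj a b) ∧ (∀ a b, G.Adj a b → o a b ∨ o b a) ∧
      (∀ a b, o a b → ¬ o b a) ∧
      ∀ w, DW o (c + ∑ i ∈ Finset.Icc 1 r, min (2*i) (η-1)) u w ∧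
           DW o (c + ∑ i ∈ Finset.Icc 1 r, min (2*i) (η-1)) w u := by
  intro r
  induction r with
  | zero =>
    intro A c o₀ h1 h2 h3 h4 hu hbnd hball
    have hAll : ∀ w : V, w ∈ A := by
      intro w
      obtain ⟨m, hm, f, hf0, hfA, _⟩ := hball w
      have : m = 0 := by omega
      subst this
      rwa [hf0] at hfA
    refine ⟨o₀, h1, fun a b hab => h4 a b hab (hAll a) (hAll b), h2, ?_⟩
    intro w
    simpa using hbnd w (hAll w)
  | succ r IH =>
    intro A c o₀ h1 h2 h3 h4 hu hbnd hball
    obtain ⟨A', o', hAA', hfront, hoo', ho'adj, ho'as, ho'dom, ho'tot, hβ'⟩ :=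
      stageA (r := r+1) hball hcycG h1 h2 h3 h4
    have hbnd' : ∀ a ∈ A', DW o' (c + min (2*(r+1)) (η-1)) u a ∧
        DW o' (c + min (2*(r+1)) (η-1)) a u := by
      intro a ha
      obtain ⟨s₁, hs₁, s₂, hs₂, hD1, hD2⟩ := hβ' a ha
      constructor
      · exact ((hbnd s₁ hs₁).1.mono_o hoo').trans hD1
      · have := hD2.trans ((hbnd s₂ hs₂).2.mono_o hoo')
        rwa [Nat.add_comm] at this
    have hball' : ∀ w, ∃ m, m ≤ r ∧ ∃ f : ℕ → V, f 0 = w ∧ f m ∈ A' ∧ Chain G.Adj m f := by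
      intro w
      obtain ⟨m, hm, f, hf0, hfA, hfc⟩ := hball w
      rcases Nat.eq_zero_or_pos m with h0 | h0
      · subst h0
        exact ⟨0, by omega, f, hf0, hAA' hfA, fun i hi => absurd hi (by omega)⟩
      · have hadj : G.Adj (f m) (f (m - 1)) := by
          have := hfc (m - 1) (by omega)
          have h1 : m - 1 + 1 = m := by omega
          rw [h1] at this
          exact this.symm
        exact ⟨m - 1, by omega, f, hf0, hfront (f m) (f (m-1)) hadj hfA,
          chain_take hfc (by omega)⟩
    obtain ⟨o, ha, hb, hc, hd⟩ := IH A' (c + min (2*(r+1)) (η-1)) o'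
      ho'adj ho'as ho'dom ho'tot (hAA' hu) hbnd' hball'
    refine ⟨o, ha, hb, hc, ?_⟩
    intro w
    have heq : c + min (2*(r+1)) (η-1) + ∑ i ∈ Finset.Icc 1 r, min (2*i) (η-1) =
        c + ∑ i ∈ Finset.Icc 1 (r+1), min (2*i) (η-1) := by
      rw [Finset.sum_Icc_succ_top (by omega : 1 ≤ r+1)]
      omega
    have := hd w
    rwa [heq] at this
end ODAux

/-- A bridgeless connected graph with radius at most `r` in which every
edge lies on a cycle of length at most `η` admits an orientation of diameter at most
`2 * ∑_{i=1}^{r} min (2i) (η-1)`; in particular, one of diameter at most `2r(η-1)`. -/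
theorem oriented_diameter_bound [Fintype V] (G : SimpleGraph V)
    (hconn : G.Connected) (hbl : Bridgeless G)
    (r : ℕ) (hr : 1 ≤ r) (u : V) (hu : ∀ v : V, G.dist u v ≤ r)
    (η : ℕ) (hη : 3 ≤ η) (hcyc : ∀ e ∈ G.edgeSet, InCycleLE G e η) :
    OrientDiamLE G (2 * ∑ i ∈ Finset.Icc 1 r, min (2 * i) (η - 1)) ∧
      OrientDiamLE G (2 * (r * (η - 1))) := by
  classical
  have hcycG : ∀ x y : V, G.Adj x y →
      ∃ m, m ≤ η - 1 ∧ ∃ f : ℕ → V, f 0 = y ∧ f m = x ∧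
        ODAux.Chain (ODAux.AvoidRel G x y) m f := by
    intro x y hxy
    exact ODAux.exists_avoid_walk (hcyc s(x,y) (G.mem_edgeSet.mpr hxy))
  have hball : ∀ w : V, ∃ m, m ≤ r ∧ ∃ f : ℕ → V, f 0 = w ∧ f m ∈ ({u} : Set V) ∧
      ODAux.Chain G.Adj m f := by
    intro w
    obtain ⟨p, hp⟩ := hconn.exists_walk_length_eq_dist u w
    refine ⟨p.length, by rw [hp]; exact hu w, fun i => p.reverse.getVert i, ?_, ?_, ?_⟩
    · exact p.reverse.getVert_zero
    · show p.reverse.getVert p.length ∈ ({u} : Set V)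
      rw [show p.length = p.reverse.length by rw [SimpleGraph.Walk.length_reverse]]
      rw [SimpleGraph.Walk.getVert_length]
      exact rfl
    · intro i hi
      apply p.reverse.adj_getVert_succ
      rwa [SimpleGraph.Walk.length_reverse]
  obtain ⟨o, hoadj, hototal, hoas, hbnds⟩ := ODAux.outer u hcycG r ({u} : Set V) 0
    (fun _ _ => False)
    (fun _ _ h => h.elim) (fun _ _ h => h.elim) (fun _ _ h => h.elim)
    (fun a b hab ha hb => by
      rw [Set.mem_singleton_iff] at ha hb
      subst ha; subst hb
      exact absurd hab (G.loopless.irrefl _))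
    rfl
    (fun a ha => by
      rw [Set.mem_singleton_iff] at ha
      subst ha
      exact ⟨ODAux.DW.refl _ _ _, ODAux.DW.refl _ _ _⟩)
    hball
  have hbnds' : ∀ w, ODAux.DW o (∑ i ∈ Finset.Icc 1 r, min (2 * i) (η - 1)) u w ∧
      ODAux.DW o (∑ i ∈ Finset.Icc 1 r, min (2 * i) (η - 1)) w u := by
    intro w
    have := hbnds w
    rwa [Nat.zero_add] at this
  have hdiam : ∀ x y, DPathLE o (2 * ∑ i ∈ Finset.Icc 1 r, min (2 * i) (η - 1)) x y := by
    intro x y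
    have h3 := ((hbnds' x).2).trans ((hbnds' y).1)
    rw [← Nat.two_mul] at h3
    exact ODAux.dw_to_dpath' h3
  have main1 : OrientDiamLE G (2 * ∑ i ∈ Finset.Icc 1 r, min (2 * i) (η - 1)) :=
    ⟨o, ⟨hoadj, hototal, hoas⟩, hdiam⟩
  refine ⟨main1, ?_⟩
  obtain ⟨o', ho', hd⟩ := main1
  refine ⟨o', ho', fun x y => ?_⟩
  obtain ⟨m, hm, f, hf⟩ := hd x y
  refine ⟨m, ?_, f, hf⟩
  have hsum : (∑ i ∈ Finset.Icc 1 r, min (2 * i) (η - 1)) ≤ r * (η - 1) := by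
    calc (∑ i ∈ Finset.Icc 1 r, min (2 * i) (η - 1))
        ≤ ∑ _i ∈ Finset.Icc 1 r, (η - 1) :=
          Finset.sum_le_sum (fun i _ => min_le_right _ _)
      _ = (Finset.Icc 1 r).card * (η - 1) := by rw [Finset.sum_const, smul_eq_mul]
      _ = r * (η - 1) := by
          rw [Nat.card_Icc]
          congr 1
  omega
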